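/- Let F be a filter on ω extending the cofinite filter and let H ∈ H_F. Then there exists an infinite set X ⊆ ω such that every infinite subset of X is the range of some branch of H; that is, for every infinite Y ⊆ X there exists f ∈ [H] with range(f) = Y. -/

import Mathlib

/-- The restriction `x↾n` of `x : ℕ → ℕ` to its first `n` values, as a finite sequence. -/
def res (x : ℕ → ℕ) (n : ℕ) : List ℕ := List.ofFn fun i : Fin n => x i

/-- A subtree of `ω^{<ω}`: a set of finite sequences closed under initial segments. -/
def IsSubtree (T : Set (List ℕ)) : Prop := ∀ s ∈ T, ∀ t : List ℕ, t <+: s → t ∈ T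

/-- `[T]`, the set of branches of a subtree `T`. -/
def branches (T : Set (List ℕ)) : Set (ℕ → ℕ) := {x | ∀ n, res x n ∈ T}

/-- `H ∈ H_F`: a nonempty subtree each of whose nodes splits along a set in `F`. -/
def MemHechlerF (F : Filter ℕ) (H : Set (List ℕ)) : Prop :=
  IsSubtree H ∧ [] ∈ H ∧ ∀ s ∈ H, {n : ℕ | s ++ [n] ∈ H} ∈ F

/-- `m` is a good next value over the finite set `p`. -/
def Good (H : Set (List ℕ)) (p : Finset ℕ) (m : ℕ) : Prop :=
  (∀ s ∈ H, s.Pairwise (· < ·) → (∀ x ∈ s, x ∈ p) → s ++ [m] ∈ H) ∧ ∀ x ∈ p, x < m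

lemma finite_sorted (p : Finset ℕ) :
    {s : List ℕ | s.Pairwise (· < ·) ∧ ∀ x ∈ s, x ∈ p}.Finite := by
  apply Set.Finite.of_finite_image (f := fun s => s.toFinset)
  · apply Set.Finite.subset (Set.finite_coe_iff.mp ?_ : (↑p.powerset : Set (Finset ℕ)).Finite)
    · rintro q ⟨s, hs, rfl⟩
      simp only [Finset.coe_powerset, Set.mem_preimage, Set.mem_powerset_iff,
        Finset.coe_subset, Finset.mem_coe]
      intro x hx
      exact hs.2 x (List.mem_toFinset.mp hx)
    · infer_instance
  · rintro s hs t ht hst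
    exact List.Perm.eq_of_pairwise (fun _ _ _ _ h1 h2 => absurd (h1.trans h2) (lt_irrefl _)) hs.1 ht.1
      (List.perm_of_nodup_nodup_toFinset_eq hs.1.nodup ht.1.nodup hst)

lemma good_mem (F : Filter ℕ) (hF : F ≤ Filter.cofinite) (H : Set (List ℕ))
    (hH : MemHechlerF F H) (p : Finset ℕ) : {m | Good H p m} ∈ F := by
  have h1 : {m | ∀ s ∈ H, s.Pairwise (· < ·) → (∀ x ∈ s, x ∈ p) → s ++ [m] ∈ H} ∈ F := by
    have hfin : ({s : List ℕ | s ∈ H ∧ s.Pairwise (· < ·) ∧ ∀ x ∈ s, x ∈ p}).Finite :=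
      (finite_sorted p).subset (fun s hs => ⟨hs.2.1, hs.2.2⟩)
    have : (⋂ s ∈ {s : List ℕ | s ∈ H ∧ s.Pairwise (· < ·) ∧ ∀ x ∈ s, x ∈ p},
        {m | s ++ [m] ∈ H}) ∈ F := by
      rw [Filter.biInter_mem hfin]
      exact fun s hs => hH.2.2 s hs.1
    apply Filter.mem_of_superset this
    intro m hm s hsH hsort hmem
    exact Set.mem_iInter₂.mp hm s ⟨hsH, hsort, hmem⟩
  have h2 : {m | ∀ x ∈ p, x < m} ∈ F := by
    apply hF
    apply Set.Finite.subset (Set.finite_Iic (p.sup id))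
    intro m hm
    simp only [Set.mem_compl_iff, Set.mem_setOf_eq, not_forall] at hm
    obtain ⟨x, hx, hxm⟩ := hm
    exact le_trans (not_lt.mp hxm) (Finset.le_sup (f := id) hx)
  exact Filter.inter_mem h1 h2

/-- The next value chosen over a finite set `p`. -/
noncomputable def nxt (F : Filter ℕ) [F.NeBot] (hF : F ≤ Filter.cofinite) (H : Set (List ℕ))
    (hH : MemHechlerF F H) (p : Finset ℕ) : ℕ :=
  (Filter.nonempty_of_mem (good_mem F hF H hH p)).choose

lemma nxt_good (F : Filter ℕ) [F.NeBot] (hF : F ≤ Filter.cofinite) (H : Set (List ℕ))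
    (hH : MemHechlerF F H) (p : Finset ℕ) : Good H p (nxt F hF H hH p) :=
  (Filter.nonempty_of_mem (good_mem F hF H hH p)).choose_spec

/-- The finite sets of the first `n` chosen values. -/
noncomputable def AA (F : Filter ℕ) [F.NeBot] (hF : F ≤ Filter.cofinite) (H : Set (List ℕ))
    (hH : MemHechlerF F H) : ℕ → Finset ℕ
  | 0 => ∅
  | n + 1 => insert (nxt F hF H hH (AA F hF H hH n)) (AA F hF H hH n)

theorem range_of_hechlerF (F : Filter ℕ) [F.NeBot] (hF : F ≤ Filter.cofinite)
    (H : Set (List ℕ)) (hH : MemHechlerF F H) :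
    ∃ X : Set ℕ, X.Infinite ∧
      ∀ Y : Set ℕ, Y ⊆ X → Y.Infinite → ∃ f ∈ branches H, Set.range f = Y := by
  set A : ℕ → Finset ℕ := AA F hF H hH with hA
  set a : ℕ → ℕ := fun n => nxt F hF H hH (A n) with ha
  have hAsucc : ∀ n, A (n + 1) = insert (a n) (A n) := fun n => rfl
  have hgood : ∀ n, Good H (A n) (a n) := fun n => nxt_good F hF H hH (A n)
  have hmemA : ∀ m n, m < n → a m ∈ A n := by
    intro m n h
    induction n with
    | zero => omega
    | succ k ih =>
      rw [hAsucc, Finset.mem_insert]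
      rcases Nat.lt_succ_iff_lt_or_eq.mp h with h' | h'
      · exact Or.inr (ih h')
      · exact Or.inl (by rw [h'])
  have hamono : StrictMono a := by
    have : ∀ m n, m < n → a m < a n := fun m n h => (hgood n).2 _ (hmemA m n h)
    exact fun m n h => this m n h
  refine ⟨Set.range a, Set.infinite_range_of_injective hamono.injective, ?_⟩
  intro Y hY hYinf
  set f : ℕ → ℕ := Nat.nth (· ∈ Y) with hf
  have hYinf' : {n | (· ∈ Y) n}.Infinite := hYinf
  have hfmono : StrictMono f := Nat.nth_strictMono hYinf'
  refine ⟨f, ?_, Nat.range_nth_of_infinite hYinf'⟩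
  -- f is a branch of H
  have hrange : ∀ i, f i ∈ Set.range a := by
    intro i
    apply hY
    have : f i ∈ Set.range f := Set.mem_range_self i
    rwa [Nat.range_nth_of_infinite hYinf'] at this
  -- index function: f i = a (idx i)
  choose idx hidx using hrange
  have hsorted : ∀ n, (res f n).Pairwise (· < ·) := by
    intro n
    rw [res, List.pairwise_ofFn]
    intro i j hij
    exact hfmono hij
  intro n
  induction n with
  | zero => exact hH.2.1
  | succ n ih =>
    have hres : res f (n + 1) = res f n ++ [f n] := by
      rw [res, List.ofFn_succ']
      simp [res, List.concat_eq_append]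
    rw [hres, ← hidx n]
    apply (hgood (idx n)).1 _ ih (hsorted n)
    intro x hx
    rw [res, List.mem_ofFn] at hx
    obtain ⟨i, rfl⟩ := hx
    have hlt : f i < f n := hfmono i.2
    rw [← hidx i, ← hidx n] at hlt
    have : idx i < idx n := hamono.lt_iff_lt.mp hlt
    have := hmemA (idx i) (idx n) this
    rwa [hidx] at this
  -- close: f n = a (idx n) used implicitly
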